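/- arXiv:2412.17178 — 3 statements merged into one kernel-verified Lean document; each statement's English description precedes it below -/
import Mathlib

section
/- Let n, d ≥ 1 and let U_i, V_i ∈ ℝ^{d×d} (1 ≤ i ≤ n) satisfy Assumption 2. Then the block-factorizable matrix Q ∈ ℝ^{dn×dn} is invertible and Q⁻¹ = Σ_{i=1}^{n} Γ_i Δ_i Γ_iᵀ. In particular, Q⁻¹ is block tridiagonal. -/
open Matrix BigOperators
open scoped Classical

/-- The block-factorizable matrix with `(i,j)`-th `d×d` block `U_i V_jᵀ` for `i ≤ j`
and `V_i U_jᵀ` for `i > j`. -/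
noncomputable def blockQ (n d : ℕ) (U V : Fin n → Matrix (Fin d) (Fin d) ℝ) :
    Matrix (Fin n × Fin d) (Fin n × Fin d) ℝ :=
  Matrix.of fun p q =>
    if p.1 ≤ q.1 then (U p.1 * (V q.1)ᵀ) p.2 q.2 else (V p.1 * (U q.1)ᵀ) p.2 q.2

/-- Assumption 2. -/
def Assumption2 (n d : ℕ) (U V : Fin n → Matrix (Fin d) (Fin d) ℝ) : Prop :=
  (∀ i : Fin n, (U i * (V i)ᵀ).PosDef) ∧
    ∀ i j : Fin n, i < j → (U i * (V i)ᵀ - U i * (U j)⁻¹ * V j * (U i)ᵀ).PosDef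

/-- `E_i`, the `dn×d` block column matrix whose `i`-th block is the identity. -/
def Emat (n d : ℕ) (i : Fin n) : Matrix (Fin n × Fin d) (Fin d) ℝ :=
  Matrix.of fun p b => if p.1 = i ∧ p.2 = b then 1 else 0

/-- `Λ_{[i→j]}` for `1 ≤ i < j ≤ n`. -/
noncomputable def BLamMid (n d : ℕ) (U V : Fin n → Matrix (Fin d) (Fin d) ℝ) (i j : Fin n) :
    Matrix (Fin n × Fin d) (Fin n × Fin d) ℝ :=
  (Emat n d i - Emat n d j * ((U j)ᵀ)⁻¹ * (U i)ᵀ) *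
    (U i * (V i)ᵀ - U i * (U j)⁻¹ * V j * (U i)ᵀ)⁻¹ *
    (Emat n d i - Emat n d j * ((U j)ᵀ)⁻¹ * (U i)ᵀ)ᵀ

/-- `Λ_{[i→n+1]} = E_i (U_i V_iᵀ)⁻¹ E_iᵀ`. -/
noncomputable def BLamEnd (n d : ℕ) (U V : Fin n → Matrix (Fin d) (Fin d) ℝ) (i : Fin n) :
    Matrix (Fin n × Fin d) (Fin n × Fin d) ℝ :=
  Emat n d i * (U i * (V i)ᵀ)⁻¹ * (Emat n d i)ᵀ

/-- `Δ_i = (U_i V_iᵀ − U_i U_{i+1}⁻¹ V_{i+1} U_iᵀ)⁻¹` for `i ≤ n−1`,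
and `Δ_n = (U_n V_nᵀ)⁻¹`. -/
noncomputable def BDelta (n d : ℕ) (U V : Fin n → Matrix (Fin d) (Fin d) ℝ) (i : Fin n) :
    Matrix (Fin d) (Fin d) ℝ :=
  if h : (i : ℕ) + 1 < n then
    (U i * (V i)ᵀ - U i * (U ⟨(i : ℕ) + 1, h⟩)⁻¹ * V ⟨(i : ℕ) + 1, h⟩ * (U i)ᵀ)⁻¹
  else (U i * (V i)ᵀ)⁻¹

/-- `Γ_i = E_i − E_{i+1} Θ_{i+1}ᵀ` with `Θ_{i+1} = U_i U_{i+1}⁻¹` for `i ≤ n−1`,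
and `Γ_n = E_n`. -/
noncomputable def BGamma (n d : ℕ) (U : Fin n → Matrix (Fin d) (Fin d) ℝ) (i : Fin n) :
    Matrix (Fin n × Fin d) (Fin d) ℝ :=
  if h : (i : ℕ) + 1 < n then
    Emat n d i - Emat n d ⟨(i : ℕ) + 1, h⟩ * (U i * (U ⟨(i : ℕ) + 1, h⟩)⁻¹)ᵀ
  else Emat n d i


namespace Stmt10

variable {n d : ℕ} {U V : Fin n → Matrix (Fin d) (Fin d) ℝ}

/-! ### Block matrix infrastructure -/

def mk (f : Fin n → Fin n → Matrix (Fin d) (Fin d) ℝ) :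
    Matrix (Fin n × Fin d) (Fin n × Fin d) ℝ :=
  Matrix.of fun p q => f p.1 q.1 p.2 q.2

def col (c : Fin n → Matrix (Fin d) (Fin d) ℝ) : Matrix (Fin n × Fin d) (Fin d) ℝ :=
  Matrix.of fun p b => c p.1 p.2 b

lemma mk_apply (f : Fin n → Fin n → Matrix (Fin d) (Fin d) ℝ) (p q : Fin n × Fin d) :
    mk f p q = f p.1 q.1 p.2 q.2 := rfl

lemma col_mul (c : Fin n → Matrix (Fin d) (Fin d) ℝ) (M : Matrix (Fin d) (Fin d) ℝ) :
    col c * M = col (fun k => c k * M) := by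
  ext ⟨k, a⟩ b
  simp [col, Matrix.mul_apply]

lemma col_sub (c e : Fin n → Matrix (Fin d) (Fin d) ℝ) :
    col c - col e = col (fun k => c k - e k) := by
  ext ⟨k, a⟩ b; simp [col]

lemma col_mul_colT (c e : Fin n → Matrix (Fin d) (Fin d) ℝ) :
    col c * (col e)ᵀ = mk (fun k l => c k * (e l)ᵀ) := by
  ext ⟨k, a⟩ ⟨l, b⟩
  simp [col, mk, Matrix.mul_apply, Matrix.transpose_apply]

lemma mk_mul (f g : Fin n → Fin n → Matrix (Fin d) (Fin d) ℝ) :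
    mk f * mk g = mk (fun i k => ∑ j, f i j * g j k) := by
  ext ⟨i, a⟩ ⟨k, b⟩
  simp only [mk, Matrix.mul_apply, Matrix.of_apply, Fintype.sum_prod_type, Matrix.sum_apply]

lemma mk_one :
    (mk (fun i j : Fin n => if i = j then (1 : Matrix (Fin d) (Fin d) ℝ) else 0)) = 1 := by
  ext ⟨i, a⟩ ⟨j, b⟩
  by_cases h : i = j <;> simp [mk, Matrix.one_apply, Prod.ext_iff, h]

lemma sum_mk (f : Fin n → Fin n → Fin n → Matrix (Fin d) (Fin d) ℝ) :
    ∑ i, mk (f i) = mk (fun k l => ∑ i, f i k l) := by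
  ext ⟨k, a⟩ ⟨l, b⟩
  simp [mk, Matrix.sum_apply]

lemma Emat_eq (i : Fin n) :
    Emat n d i = col (fun k => if k = i then (1 : Matrix (Fin d) (Fin d) ℝ) else 0) := by
  ext ⟨k, a⟩ b
  by_cases h : k = i <;> simp [Emat, col, Matrix.one_apply, h]

/-! ### Block descriptions of the data -/

noncomputable def gam (U : Fin n → Matrix (Fin d) (Fin d) ℝ) (i j : Fin n) :
    Matrix (Fin d) (Fin d) ℝ :=
  if (j : ℕ) = (i : ℕ) then 1
  else if (j : ℕ) = (i : ℕ) + 1 then -((U i * (U j)⁻¹)ᵀ) else 0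

noncomputable def Qb (U V : Fin n → Matrix (Fin d) (Fin d) ℝ) (k j : Fin n) :
    Matrix (Fin d) (Fin d) ℝ :=
  if k ≤ j then U k * (V j)ᵀ else V k * (U j)ᵀ

noncomputable def Wm (U V : Fin n → Matrix (Fin d) (Fin d) ℝ) (i : Fin n) :
    Matrix (Fin d) (Fin d) ℝ :=
  if h : (i : ℕ) + 1 < n then
    V i - U i * (U ⟨(i : ℕ) + 1, h⟩)⁻¹ * V ⟨(i : ℕ) + 1, h⟩
  else V i

lemma blockQ_eq (U V : Fin n → Matrix (Fin d) (Fin d) ℝ) :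
    blockQ n d U V = mk (Qb U V) := by
  ext ⟨k, a⟩ ⟨j, b⟩
  by_cases h : k ≤ j <;> simp [blockQ, mk, Qb, h]

lemma BGamma_eq (U : Fin n → Matrix (Fin d) (Fin d) ℝ) (i : Fin n) :
    BGamma n d U i = col (gam U i) := by
  unfold BGamma
  split
  · rename_i h
    rw [Emat_eq, Emat_eq, col_mul, col_sub]
    refine congrArg col (funext fun k => ?_)
    have hii : ¬ i = (⟨(i : ℕ) + 1, h⟩ : Fin n) := by
      intro hc; have := congrArg Fin.val hc; simp at this
    by_cases hk : (k : ℕ) = (i : ℕ)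
    · have hk' : k = i := Fin.ext hk
      have hne2 : ¬ k = (⟨(i : ℕ) + 1, h⟩ : Fin n) := by
        intro hc; have := congrArg Fin.val hc; simp at this; omega
      simp [gam, hk', hk, hne2, hii]
    · by_cases hk1 : (k : ℕ) = (i : ℕ) + 1
      · have hk' : k = (⟨(i : ℕ) + 1, h⟩ : Fin n) := Fin.ext hk1
        have hne : ¬ k = i := fun hc => hk (congrArg Fin.val hc)
        have hii' : ¬ (⟨(i : ℕ) + 1, h⟩ : Fin n) = i := fun hc => hii hc.symm
        simp [gam, hk', hk, hk1, hne, hii']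
      · have hne : ¬ k = i := fun hc => hk (congrArg Fin.val hc)
        have hne2 : ¬ k = (⟨(i : ℕ) + 1, h⟩ : Fin n) := by
          intro hc; have := congrArg Fin.val hc; simp at this; omega
        simp [gam, hk, hk1, hne, hne2]
  · rename_i h
    rw [Emat_eq]
    refine congrArg col (funext fun k => ?_)
    by_cases hk : (k : ℕ) = (i : ℕ)
    · have hk' : k = i := Fin.ext hk
      simp [gam, hk', hk]
    · have hne : ¬ k = i := fun hc => hk (congrArg Fin.val hc)
      have hk1 : ¬ (k : ℕ) = (i : ℕ) + 1 := by have := k.isLt; omega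
      simp [gam, hk, hk1, hne]

/-! ### Consequences of Assumption 2 -/

lemma hsym (hA : Assumption2 n d U V) (i : Fin n) : V i * (U i)ᵀ = U i * (V i)ᵀ := by
  have h := (hA.1 i).1
  have h2 : (U i * (V i)ᵀ)ᵀ = U i * (V i)ᵀ := by
    ext a b
    have := congrFun (congrFun h a) b
    simpa [Matrix.conjTranspose_apply] using this
  calc V i * (U i)ᵀ = (U i * (V i)ᵀ)ᵀ := by simp [Matrix.transpose_mul]
  _ = U i * (V i)ᵀ := h2

lemma hUdet (hA : Assumption2 n d U V) (i : Fin n) : IsUnit (U i).det := by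
  have := (hA.1 i).det_pos
  rw [Matrix.det_mul] at this
  exact isUnit_iff_ne_zero.2 (by intro hc; rw [hc] at this; simp at this)

lemma hs_lemma (hA : Assumption2 n d U V) (j : Fin n) :
    (V j)ᵀ * ((U j)ᵀ)⁻¹ = (U j)⁻¹ * V j := by
  have hdU := hUdet hA j
  have hdUT : IsUnit ((U j)ᵀ).det := by rwa [Matrix.det_transpose]
  have c1 : (U j)⁻¹ * (U j * (V j)ᵀ) = (V j)ᵀ := by
    rw [← Matrix.mul_assoc, Matrix.nonsing_inv_mul _ hdU, one_mul]
  have c2 : V j * (U j)ᵀ * ((U j)ᵀ)⁻¹ = V j :=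
    Matrix.mul_nonsing_inv_cancel_right _ _ hdUT
  calc (V j)ᵀ * ((U j)ᵀ)⁻¹ = ((U j)⁻¹ * (U j * (V j)ᵀ)) * ((U j)ᵀ)⁻¹ := by rw [c1]
  _ = ((U j)⁻¹ * (V j * (U j)ᵀ)) * ((U j)ᵀ)⁻¹ := by rw [hsym hA j]
  _ = (U j)⁻¹ * (V j * (U j)ᵀ * ((U j)ᵀ)⁻¹) := by rw [Matrix.mul_assoc, Matrix.mul_assoc]
  _ = (U j)⁻¹ * V j := by rw [c2]

lemma UW_eq (hA : Assumption2 n d U V) (i : Fin n) (h : (i : ℕ) + 1 < n) :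
    U i * (Wm U V i)ᵀ =
      U i * (V i)ᵀ - U i * (U ⟨(i : ℕ) + 1, h⟩)⁻¹ * V ⟨(i : ℕ) + 1, h⟩ * (U i)ᵀ := by
  set i' : Fin n := ⟨(i : ℕ) + 1, h⟩ with hi'
  have hWm : Wm U V i = V i - U i * (U i')⁻¹ * V i' := by rw [Wm, dif_pos h]
  rw [hWm]
  have e1 : (U i * (U i')⁻¹ * V i')ᵀ = (V i')ᵀ * ((U i')ᵀ)⁻¹ * (U i)ᵀ := by
    rw [Matrix.transpose_mul, Matrix.transpose_mul, Matrix.transpose_nonsing_inv,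
      Matrix.mul_assoc]
  rw [Matrix.transpose_sub, Matrix.mul_sub, e1, hs_lemma hA i']
  simp only [Matrix.mul_assoc]

lemma hUW (hA : Assumption2 n d U V) (i : Fin n) : (U i * (Wm U V i)ᵀ).PosDef := by
  by_cases h : (i : ℕ) + 1 < n
  · rw [UW_eq hA i h]
    exact hA.2 i ⟨(i : ℕ) + 1, h⟩ (by rw [Fin.lt_def]; simp)
  · rw [Wm, dif_neg h]
    exact hA.1 i

lemma BDelta_eq (hA : Assumption2 n d U V) (i : Fin n) :
    BDelta n d U V i = (U i * (Wm U V i)ᵀ)⁻¹ := by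
  by_cases h : (i : ℕ) + 1 < n
  · rw [BDelta, dif_pos h, UW_eq hA i h]
  · rw [BDelta, dif_neg h, Wm, dif_neg h]

lemma hWdet (hA : Assumption2 n d U V) (i : Fin n) : IsUnit ((Wm U V i)ᵀ).det := by
  have := (hUW hA i).det_pos
  rw [Matrix.det_mul] at this
  exact isUnit_iff_ne_zero.2 (by intro hc; rw [hc] at this; simp at this)

/-! ### The three key block computations -/

lemma key1 (hA : Assumption2 n d U V) (i k : Fin n) :
    (∑ j, Qb U V k j * gam U i j)
      = if (k : ℕ) ≤ (i : ℕ) then U k * (Wm U V i)ᵀ else 0 := by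
  by_cases h : (i : ℕ) + 1 < n
  · set i' : Fin n := ⟨(i : ℕ) + 1, h⟩ with hi'
    have hvi' : (i' : ℕ) = (i : ℕ) + 1 := rfl
    have step : ∀ j : Fin n, Qb U V k j * gam U i j
        = (if j = i then Qb U V k i else 0)
          + (if j = i' then Qb U V k i' * (-((U i * (U i')⁻¹)ᵀ)) else 0) := by
      intro j
      have hii : ¬ i = i' := by intro hc; have := congrArg Fin.val hc; omega
      by_cases h1 : (j : ℕ) = (i : ℕ)
      · have hj : j = i := Fin.ext h1
        have hne : ¬ j = i' := by intro hc; have := congrArg Fin.val hc; omega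
        simp [gam, hj, hne, hii]
      · by_cases h2 : (j : ℕ) = (i : ℕ) + 1
        · have hj : j = i' := Fin.ext h2
          have hne : ¬ j = i := fun hc => h1 (congrArg Fin.val hc)
          subst hj
          simp [gam, h1, h2, hne]
        · have hne : ¬ j = i := fun hc => h1 (congrArg Fin.val hc)
          have hne2 : ¬ j = i' := by intro hc; have := congrArg Fin.val hc; omega
          simp [gam, h1, h2, hne, hne2]
    rw [Finset.sum_congr rfl (fun j _ => step j), Finset.sum_add_distrib]
    simp only [Finset.sum_ite_eq', Finset.mem_univ, if_true]
    have hWm : Wm U V i = V i - U i * (U i')⁻¹ * V i' := by rw [Wm, dif_pos h]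
    have hUT : IsUnit ((U i')ᵀ).det := by
      rw [Matrix.det_transpose]; exact hUdet hA i'
    by_cases hk : (k : ℕ) ≤ (i : ℕ)
    · have hk1 : k ≤ i := Fin.le_def.2 hk
      have hk2 : k ≤ i' := Fin.le_def.2 (by omega)
      rw [if_pos hk, Qb, if_pos hk1, Qb, if_pos hk2, hWm]
      rw [Matrix.transpose_sub, Matrix.mul_sub]
      have e1 : (U i * (U i')⁻¹ * V i')ᵀ = (V i')ᵀ * (((U i')ᵀ)⁻¹ * (U i)ᵀ) := by
        rw [Matrix.transpose_mul, Matrix.transpose_mul, Matrix.transpose_nonsing_inv]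
      have e2 : (U i * (U i')⁻¹)ᵀ = ((U i')ᵀ)⁻¹ * (U i)ᵀ := by
        rw [Matrix.transpose_mul, Matrix.transpose_nonsing_inv]
      rw [e1]
      all_goals simp only [Matrix.mul_neg, Matrix.mul_assoc, sub_eq_add_neg,
        Matrix.transpose_mul, Matrix.transpose_nonsing_inv]
    · rw [if_neg hk]
      have hki : ¬ k ≤ i := fun hc => hk (Fin.le_def.1 hc)
      rw [Qb, if_neg hki]
      by_cases hk2 : (k : ℕ) = (i : ℕ) + 1
      · have hkk : k = i' := Fin.ext hk2
        rw [hkk, Qb, if_pos le_rfl]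
        have e2 : (U i * (U i')⁻¹)ᵀ = ((U i')ᵀ)⁻¹ * (U i)ᵀ := by
          rw [Matrix.transpose_mul, Matrix.transpose_nonsing_inv]
        rw [e2, Matrix.mul_neg, ← hsym hA i']
        have hcan : V i' * (U i')ᵀ * (((U i')ᵀ)⁻¹ * (U i)ᵀ) = V i' * (U i)ᵀ := by
          rw [← Matrix.mul_assoc, Matrix.mul_nonsing_inv_cancel_right _ _ hUT]
        rw [hcan]
        abel
      · have hki' : ¬ k ≤ i' := by
          rw [Fin.le_def]; omega
        rw [Qb, if_neg hki']
        have e2 : (U i * (U i')⁻¹)ᵀ = ((U i')ᵀ)⁻¹ * (U i)ᵀ := by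
          rw [Matrix.transpose_mul, Matrix.transpose_nonsing_inv]
        rw [e2, Matrix.mul_neg]
        have : V k * (U i')ᵀ * (((U i')ᵀ)⁻¹ * (U i)ᵀ) = V k * (U i)ᵀ := by
          rw [← Matrix.mul_assoc, Matrix.mul_nonsing_inv_cancel_right _ _ hUT]
        rw [this]
        abel
  · have step : ∀ j : Fin n, Qb U V k j * gam U i j
        = if j = i then Qb U V k i else 0 := by
      intro j
      by_cases h1 : (j : ℕ) = (i : ℕ)
      · have hj : j = i := Fin.ext h1
        simp [gam, hj]
      · have hne : ¬ j = i := fun hc => h1 (congrArg Fin.val hc)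
        have h2 : ¬ (j : ℕ) = (i : ℕ) + 1 := by have := j.isLt; omega
        simp [gam, h1, h2, hne]
    rw [Finset.sum_congr rfl (fun j _ => step j)]
    simp only [Finset.sum_ite_eq', Finset.mem_univ, if_true]
    have hk : (k : ℕ) ≤ (i : ℕ) := by have := k.isLt; omega
    rw [if_pos hk, Qb, if_pos (Fin.le_def.2 hk), Wm, dif_neg h]

lemma key2 (hA : Assumption2 n d U V) (i k : Fin n) :
    (if (k : ℕ) ≤ (i : ℕ) then U k * (Wm U V i)ᵀ else 0) * BDelta n d U V i
      = if (k : ℕ) ≤ (i : ℕ) then U k * (U i)⁻¹ else 0 := by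
  rw [BDelta_eq hA]
  split
  · rw [Matrix.mul_inv_rev, Matrix.mul_assoc, ← Matrix.mul_assoc ((Wm U V i)ᵀ),
      Matrix.mul_nonsing_inv _ (hWdet hA i), one_mul]
  · rw [zero_mul]

lemma gam_transpose (i l : Fin n) :
    (gam U i l)ᵀ = if (l : ℕ) = (i : ℕ) then 1
      else if (l : ℕ) = (i : ℕ) + 1 then -(U i * (U l)⁻¹) else 0 := by
  unfold gam
  split
  · simp
  · split <;> simp

lemma key3 (hA : Assumption2 n d U V) (k l : Fin n) :
    (∑ i : Fin n, (if (k : ℕ) ≤ (i : ℕ) then U k * (U i)⁻¹ else 0) * (gam U i l)ᵀ)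
      = if k = l then 1 else 0 := by
  have step : ∀ i : Fin n,
      (if (k : ℕ) ≤ (i : ℕ) then U k * (U i)⁻¹ else 0) * (gam U i l)ᵀ
      = (if i = l then (if (k : ℕ) ≤ (l : ℕ) then U k * (U l)⁻¹ else 0) else 0)
        + (if (i : ℕ) + 1 = (l : ℕ)
            then (if (k : ℕ) ≤ (i : ℕ) then -(U k * (U l)⁻¹) else 0) else 0) := by
    intro i
    rw [gam_transpose]
    by_cases h1 : (l : ℕ) = (i : ℕ)
    · have hl : i = l := (Fin.ext h1).symm
      have h2 : ¬ ((i : ℕ) + 1 = (l : ℕ)) := by omega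
      subst hl
      simp [h1, h2]
    · by_cases h2 : (l : ℕ) = (i : ℕ) + 1
      · have hne : ¬ i = l := by intro hc; subst hc; omega
        rw [if_neg h1, if_pos h2, if_neg hne, if_pos h2.symm]
        split
        · rename_i hki
          rw [Matrix.mul_neg, zero_add, Matrix.mul_assoc,
            Matrix.nonsing_inv_mul_cancel_left _ _ (hUdet hA i)]
        · rw [zero_mul, zero_add]
      · have hne : ¬ i = l := by intro hc; subst hc; omega
        have h2' : ¬ ((i : ℕ) + 1 = (l : ℕ)) := fun hc => h2 hc.symm
        rw [if_neg h1, if_neg h2, if_neg hne, if_neg h2', mul_zero, add_zero]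
  rw [Finset.sum_congr rfl (fun i _ => step i), Finset.sum_add_distrib]
  simp only [Finset.sum_ite_eq', Finset.mem_univ, if_true]
  have hsum2 : (∑ i : Fin n, if (i : ℕ) + 1 = (l : ℕ)
      then (if (k : ℕ) ≤ (i : ℕ) then -(U k * (U l)⁻¹) else 0) else 0)
      = if 0 < (l : ℕ) ∧ (k : ℕ) < (l : ℕ) then -(U k * (U l)⁻¹) else 0 := by
    by_cases hl : 0 < (l : ℕ)
    · rw [Finset.sum_eq_single (⟨(l : ℕ) - 1, by have := l.isLt; omega⟩ : Fin n)]
      · rw [if_pos (by simp only [Fin.val_mk]; omega)]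
        by_cases hkl : (k : ℕ) < (l : ℕ)
        · rw [if_pos (by simp only [Fin.val_mk]; omega), if_pos ⟨hl, hkl⟩]
        · rw [if_neg (by simp only [Fin.val_mk]; omega),
            if_neg (by intro hc; exact hkl hc.2)]
      · intro j _ hj
        have hc : ¬ ((j : ℕ) + 1 = (l : ℕ)) := by
          intro hc; exact hj (Fin.ext (by simp only [Fin.val_mk]; omega))
        rw [if_neg hc]
      · simp
    · rw [if_neg (by intro hc; exact hl hc.1)]
      apply Finset.sum_eq_zero
      intro j _
      have hc : ¬ ((j : ℕ) + 1 = (l : ℕ)) := by omega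
      rw [if_neg hc]
  rw [hsum2]
  by_cases hkl : k = l
  · subst hkl
    rw [if_pos le_rfl, if_pos rfl, if_neg (by omega)]
    rw [add_zero, Matrix.mul_nonsing_inv _ (hUdet hA k)]
  · rw [if_neg hkl]
    by_cases hle : (k : ℕ) ≤ (l : ℕ)
    · have hlt : (k : ℕ) < (l : ℕ) := by
        rcases Nat.lt_or_ge (k : ℕ) (l : ℕ) with h | h
        · exact h
        · exact absurd (Fin.ext (le_antisymm hle h)) hkl
      rw [if_pos hle, if_pos ⟨by omega, hlt⟩]
      abel
    · rw [if_neg hle, if_neg (by intro hc; exact hle (le_of_lt hc.2)), add_zero]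

lemma gam_eq_zero (i j : Fin n) (h1 : (j : ℕ) ≠ (i : ℕ)) (h2 : (j : ℕ) ≠ (i : ℕ) + 1) :
    gam U i j = 0 := by
  simp [gam, h1, h2]

end Stmt10

open Stmt10

theorem stmt_10 (n d : ℕ) (hn : 1 ≤ n) (hd : 1 ≤ d)
    (U V : Fin n → Matrix (Fin d) (Fin d) ℝ) (hA : Assumption2 n d U V) :
    IsUnit (blockQ n d U V) ∧
      (blockQ n d U V)⁻¹ =
        ∑ i : Fin n, BGamma n d U i * BDelta n d U V i * (BGamma n d U i)ᵀ ∧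
      ∀ p q : Fin n × Fin d,
        ((p.1 : ℕ) + 2 ≤ (q.1 : ℕ) ∨ (q.1 : ℕ) + 2 ≤ (p.1 : ℕ)) →
          (blockQ n d U V)⁻¹ p q = 0 := by
  classical
  set S : Matrix (Fin n × Fin d) (Fin n × Fin d) ℝ :=
    mk (fun j l => ∑ i : Fin n, gam U i j * BDelta n d U V i * (gam U i l)ᵀ) with hS
  have hsumS : (∑ i : Fin n, BGamma n d U i * BDelta n d U V i * (BGamma n d U i)ᵀ) = S := by
    rw [hS, ← sum_mk]
    refine Finset.sum_congr rfl (fun i _ => ?_)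
    rw [BGamma_eq, col_mul, col_mul_colT]
  have hQS : blockQ n d U V * S = 1 := by
    rw [blockQ_eq, hS, mk_mul, ← mk_one]
    refine congrArg mk (funext fun k => funext fun l => ?_)
    calc ∑ j, Qb U V k j * (∑ i : Fin n, gam U i j * BDelta n d U V i * (gam U i l)ᵀ)
        = ∑ j, ∑ i, Qb U V k j * (gam U i j * BDelta n d U V i * (gam U i l)ᵀ) := by
          simp only [Finset.mul_sum]
      _ = ∑ i : Fin n, ∑ j, Qb U V k j * (gam U i j * BDelta n d U V i * (gam U i l)ᵀ) :=
          Finset.sum_comm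
      _ = ∑ i : Fin n, (∑ j, Qb U V k j * gam U i j) * BDelta n d U V i * (gam U i l)ᵀ := by
          refine Finset.sum_congr rfl fun i _ => ?_
          rw [Finset.sum_mul, Finset.sum_mul]
          refine Finset.sum_congr rfl fun j _ => ?_
          simp only [Matrix.mul_assoc]
      _ = ∑ i : Fin n, (if (k : ℕ) ≤ (i : ℕ) then U k * (Wm U V i)ᵀ else 0)
            * BDelta n d U V i * (gam U i l)ᵀ := by
          refine Finset.sum_congr rfl fun i _ => ?_
          rw [key1 hA]
      _ = ∑ i : Fin n, (if (k : ℕ) ≤ (i : ℕ) then U k * (U i)⁻¹ else 0) * (gam U i l)ᵀ := by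
          refine Finset.sum_congr rfl fun i _ => ?_
          rw [key2 hA]
      _ = if k = l then 1 else 0 := key3 hA k l
  have hdetQ : IsUnit (blockQ n d U V).det := by
    have h := congrArg Matrix.det hQS
    rw [Matrix.det_mul, Matrix.det_one] at h
    exact IsUnit.of_mul_eq_one _ h
  have hQinv : (blockQ n d U V)⁻¹ = S := Matrix.inv_eq_right_inv hQS
  refine ⟨(Matrix.isUnit_iff_isUnit_det _).2 hdetQ, by rw [hQinv, hsumS], ?_⟩
  intro p q hpq
  rw [hQinv, hS, mk_apply]
  have hzero : (∑ i : Fin n, gam U i p.1 * BDelta n d U V i * (gam U i q.1)ᵀ) = 0 := by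
    apply Finset.sum_eq_zero
    intro i _
    by_cases h1 : (p.1 : ℕ) = (i : ℕ) ∨ (p.1 : ℕ) = (i : ℕ) + 1
    · have hq1 : (q.1 : ℕ) ≠ (i : ℕ) := by omega
      have hq2 : (q.1 : ℕ) ≠ (i : ℕ) + 1 := by omega
      rw [gam_eq_zero _ _ hq1 hq2, Matrix.transpose_zero, mul_zero]
    · push_neg at h1
      rw [gam_eq_zero _ _ h1.1 h1.2, zero_mul, zero_mul]
  rw [hzero]
  simp
end

section
/- Let n ≥ 1, let u, v : {1,…,n} → ℝ satisfy Assumption 1 with Q = Q(u,v), and let a, c ∈ ℝ^n. Define arc costs ℓ(i,j) = c_i − u_j (a_i − (u_i/u_j) a_j)² / (4 u_i (u_j v_i − u_i v_j)) for 1 ≤ i < j ≤ n and ℓ(i, n+1) = c_i − a_i² / (4 u_i v_i) for 1 ≤ i ≤ n. Then for every nonempty subset S = {t_1 < t_2 < … < t_k} of {1,…,n}, setting t_{k+1} := n+1, one has −(1/4) aᵀ hat(Q_S⁻¹) a + Σ_{i ∈ S} c_i = Σ_{ℓ=1}^{k} ℓ(t_ℓ, t_{ℓ+1}). -/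
open Matrix BigOperators

/-- The factorizable matrix `Q(u,v)`. -/
noncomputable def facQ (n : ℕ) (u v : Fin n → ℝ) : Matrix (Fin n) (Fin n) ℝ :=
  Matrix.of fun i j => if i ≤ j then u i * v j else u j * v i

/-- Assumption 1. -/
def Assumption1 (n : ℕ) (u v : Fin n → ℝ) : Prop :=
  (∀ i : Fin n, 0 < u i * v i) ∧
    ∀ i j : Fin n, i < j → 0 < u i * v j * (u j * v i - u i * v j)

/-- The principal submatrix of `Q` indexed by `S`. -/
noncomputable def subMat (n : ℕ) (Q : Matrix (Fin n) (Fin n) ℝ) (S : Finset (Fin n)) :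
    Matrix {x : Fin n // x ∈ S} {x : Fin n // x ∈ S} ℝ :=
  Q.submatrix (fun p => (p : Fin n)) (fun p => (p : Fin n))

/-- The `n×n` matrix agreeing with `(Q_S)⁻¹` on `S×S` and `0` elsewhere. -/
noncomputable def hatInv (n : ℕ) (Q : Matrix (Fin n) (Fin n) ℝ) (S : Finset (Fin n)) :
    Matrix (Fin n) (Fin n) ℝ :=
  Matrix.of fun a b =>
    if ha : a ∈ S then
      if hb : b ∈ S then (subMat n Q S)⁻¹ ⟨a, ha⟩ ⟨b, hb⟩ else 0
    else 0

/-- The arc cost `ℓ(i,j) = c_i − u_j (a_i − (u_i/u_j) a_j)² / (4 u_i (u_j v_i − u_i v_j))`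
for `1 ≤ i < j ≤ n`. -/
noncomputable def arcMid (n : ℕ) (u v a c : Fin n → ℝ) (i j : Fin n) : ℝ :=
  c i - u j * (a i - u i / u j * a j) ^ 2 / (4 * (u i * (u j * v i - u i * v j)))

/-- The arc cost `ℓ(i, n+1) = c_i − a_i² / (4 u_i v_i)`. -/
noncomputable def arcEnd (n : ℕ) (u v a c : Fin n → ℝ) (i : Fin n) : ℝ :=
  c i - a i ^ 2 / (4 * (u i * v i))



noncomputable def yN (k : ℕ) (U V A : ℕ → ℝ) (i : ℕ) : ℝ :=
  if i + 1 < k then (U (i+1) * A i - U i * A (i+1)) / (U (i+1) * V i - U i * V (i+1))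
  else A i / V i

noncomputable def YN (k : ℕ) (U V A : ℕ → ℝ) : ℕ → ℝ
  | 0 => 0
  | (j+1) => yN k U V A j

noncomputable def xN (k : ℕ) (U V A : ℕ → ℝ) (j : ℕ) : ℝ :=
  (yN k U V A j - YN k U V A j) / U j

noncomputable def FN (k : ℕ) (U V A : ℕ → ℝ) (m : ℕ) : ℝ :=
  ∑ j ∈ Finset.range k, (if m ≤ j then U m * V j else U j * V m) * xN k U V A j

lemma telN (k : ℕ) (U V A : ℕ → ℝ) (hU : ∀ j, j < k → U j ≠ 0) {m : ℕ} (hm : m ≤ k) :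
    ∑ j ∈ Finset.range m, U j * xN k U V A j = YN k U V A m := by
  have h : ∑ j ∈ Finset.range m, U j * xN k U V A j
      = ∑ j ∈ Finset.range m, (YN k U V A (j+1) - YN k U V A j) := by
    refine Finset.sum_congr rfl fun j hj => ?_
    have hjk : j < k := lt_of_lt_of_le (Finset.mem_range.mp hj) hm
    have h1 : YN k U V A (j+1) = yN k U V A j := rfl
    rw [h1, xN, mul_comm, div_mul_cancel₀ _ (hU j hjk)]
  rw [h, Finset.sum_range_sub (YN k U V A) m]
  simp [YN]

lemma baseN (k : ℕ) (U V A : ℕ → ℝ) (hk : 0 < k) (hU : ∀ j, j < k → U j ≠ 0)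
    (hV : ∀ j, j < k → V j ≠ 0) : FN k U V A (k-1) = A (k-1) := by
  have hk1 : k - 1 + 1 = k := Nat.succ_pred_eq_of_pos hk
  have h1 : FN k U V A (k-1) = ∑ j ∈ Finset.range k, V (k-1) * (U j * xN k U V A j) := by
    refine Finset.sum_congr rfl fun j hj => ?_
    have hj' : j < k := Finset.mem_range.mp hj
    by_cases h : k - 1 ≤ j
    · have hje : j = k - 1 := by omega
      subst hje; rw [if_pos le_rfl]; ring
    · rw [if_neg h]; ring
  rw [h1, ← Finset.mul_sum, telN k U V A hU le_rfl]
  have h2 : YN k U V A k = yN k U V A (k-1) := by rw [← hk1]; rfl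
  rw [h2, yN, if_neg (by omega)]
  rw [mul_comm, div_mul_cancel₀ _ (hV _ (by omega))]

lemma stepN (k : ℕ) (U V A : ℕ → ℝ) (hU : ∀ j, j < k → U j ≠ 0)
    (hd : ∀ i, i + 1 < k → U (i+1) * V i - U i * V (i+1) ≠ 0)
    {i : ℕ} (hik : i + 1 < k) :
    U (i+1) * FN k U V A i - U i * FN k U V A (i+1) = U (i+1) * A i - U i * A (i+1) := by
  have hdi := hd i hik
  have h1 : U (i+1) * FN k U V A i - U i * FN k U V A (i+1)
      = ∑ j ∈ Finset.range k, (if j < i + 1 then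
          (U (i+1) * V i - U i * V (i+1)) * (U j * xN k U V A j) else 0) := by
    rw [FN, FN, Finset.mul_sum, Finset.mul_sum, ← Finset.sum_sub_distrib]
    refine Finset.sum_congr rfl fun j hj => ?_
    rcases lt_trichotomy j i with h | h | h
    · rw [if_neg (by omega), if_neg (by omega), if_pos (by omega)]; ring
    · subst h; rw [if_pos le_rfl, if_neg (by omega), if_pos (by omega)]; ring
    · rw [if_pos (by omega), if_pos (by omega), if_neg (by omega)]; ring
  have h2 : ∑ j ∈ Finset.range k, (if j < i + 1 then
          (U (i+1) * V i - U i * V (i+1)) * (U j * xN k U V A j) else 0)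
      = ∑ j ∈ Finset.range (i+1),
          (U (i+1) * V i - U i * V (i+1)) * (U j * xN k U V A j) := by
    rw [Finset.range_eq_Ico,
      ← Finset.sum_Ico_consecutive _ (Nat.zero_le (i+1)) (le_of_lt hik)]
    have h3 : ∑ j ∈ Finset.Ico (i+1) k, (if j < i + 1 then
          (U (i+1) * V i - U i * V (i+1)) * (U j * xN k U V A j) else 0) = 0 := by
      refine Finset.sum_eq_zero fun j hj => ?_
      rw [if_neg]; have := (Finset.mem_Ico.mp hj).1; omega
    rw [h3, add_zero]
    refine Finset.sum_congr (by rw [Finset.range_eq_Ico]) fun j hj => ?_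
    rw [if_pos]; exact Finset.mem_range.mp hj
  rw [h1, h2, ← Finset.mul_sum, telN k U V A hU (le_of_lt hik)]
  have h4 : YN k U V A (i+1) = yN k U V A i := rfl
  rw [h4, yN, if_pos hik, mul_comm, div_mul_cancel₀ _ hdi]

lemma rowN (k : ℕ) (U V A : ℕ → ℝ) (hk : 0 < k) (hU : ∀ j, j < k → U j ≠ 0)
    (hV : ∀ j, j < k → V j ≠ 0)
    (hd : ∀ i, i + 1 < k → U (i+1) * V i - U i * V (i+1) ≠ 0) :
    ∀ m, m < k → FN k U V A m = A m := by
  suffices H : ∀ p m, m + p + 1 = k → FN k U V A m = A m by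
    intro m hm; exact H (k - m - 1) m (by omega)
  intro p
  induction p with
  | zero =>
    intro m hm
    have hmk : m = k - 1 := by omega
    subst hmk; exact baseN k U V A hk hU hV
  | succ p ih =>
    intro m hm
    have h1 : FN k U V A (m+1) = A (m+1) := ih (m+1) (by omega)
    have hmk : m + 1 < k := by omega
    have h2 := stepN k U V A hU hd hmk
    rw [h1] at h2
    have hu : U (m+1) ≠ 0 := hU _ hmk
    have h3 : U (m+1) * FN k U V A m = U (m+1) * A m := by linarith
    exact mul_left_cancel₀ hu h3

lemma coreN (k : ℕ) (hk : 0 < k) (U V : ℕ → ℝ)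
    (hUV : ∀ i, i < k → 0 < U i * V i)
    (hD : ∀ i, i + 1 < k → 0 < U i * V (i+1) * (U (i+1) * V i - U i * V (i+1)))
    (M : Matrix (Fin k) (Fin k) ℝ)
    (hM : ∀ i j : Fin k, M i j = if (i:ℕ) ≤ (j:ℕ) then U i * V j else U j * V i)
    (A : ℕ → ℝ) :
    (fun i : Fin k => A i) ⬝ᵥ (M⁻¹ *ᵥ fun i : Fin k => A i) =
      (∑ j ∈ Finset.range (k-1),
        (U (j+1) * A j - U j * A (j+1))^2 /
          (U j * U (j+1) * (U (j+1) * V j - U j * V (j+1))))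
      + A (k-1)^2 / (U (k-1) * V (k-1)) := by
  have hU : ∀ j, j < k → U j ≠ 0 := fun j hj =>
    left_ne_zero_of_mul (ne_of_gt (hUV j hj))
  have hV : ∀ j, j < k → V j ≠ 0 := fun j hj =>
    right_ne_zero_of_mul (ne_of_gt (hUV j hj))
  have hd : ∀ i, i + 1 < k → U (i+1) * V i - U i * V (i+1) ≠ 0 := fun i hi =>
    right_ne_zero_of_mul (ne_of_gt (hD i hi))
  have hk1 : k - 1 + 1 = k := Nat.succ_pred_eq_of_pos hk
  have hmv : ∀ B : ℕ → ℝ, M *ᵥ (fun j : Fin k => xN k U V B j) = fun i : Fin k => B i := by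
    intro B; funext i
    show ∑ j : Fin k, M i j * xN k U V B j = B i
    have h1 : ∑ j : Fin k, M i j * xN k U V B j
        = ∑ j ∈ Finset.range k,
            (if (i:ℕ) ≤ j then U i * V j else U j * V i) * xN k U V B j := by
      rw [← Fin.sum_univ_eq_sum_range
        (fun j => (if (i:ℕ) ≤ j then U i * V j else U j * V i) * xN k U V B j) k]
      exact Finset.sum_congr rfl fun j _ => by rw [hM]
    rw [h1]
    exact rowN k U V B hk hU hV hd i (i.isLt)
  have hunit : IsUnit M := by
    rw [← Matrix.mulVec_surjective_iff_isUnit]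
    intro b
    refine ⟨(fun j : Fin k => xN k U V (fun m => if h : m < k then b ⟨m, h⟩ else 0) j), ?_⟩
    rw [hmv]
    funext i
    simp [i.isLt]
  have hinv : M⁻¹ *ᵥ (fun i : Fin k => A i) = fun j : Fin k => xN k U V A j := by
    conv_lhs => rw [← hmv A]
    rw [Matrix.mulVec_mulVec,
      Matrix.nonsing_inv_mul M ((Matrix.isUnit_iff_isUnit_det M).mp hunit),
      Matrix.one_mulVec]
  rw [hinv]
  show ∑ j : Fin k, A j * xN k U V A j = _
  rw [Fin.sum_univ_eq_sum_range (fun j => A j * xN k U V A j) k]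
  have h2 : ∑ j ∈ Finset.range k, A j * xN k U V A j
      = ∑ j ∈ Finset.range k, (A j * yN k U V A j / U j - A j * YN k U V A j / U j) := by
    refine Finset.sum_congr rfl fun j hj => ?_
    rw [xN]; ring
  rw [h2, Finset.sum_sub_distrib]
  have h3 : ∑ j ∈ Finset.range k, A j * YN k U V A j / U j
      = ∑ j ∈ Finset.range (k-1), A (j+1) * yN k U V A j / U (j+1) := by
    have := Finset.sum_range_succ' (fun j => A j * YN k U V A j / U j) (k-1)
    rw [hk1] at this
    rw [this]
    simp [YN]
  have h4 : ∑ j ∈ Finset.range k, A j * yN k U V A j / U j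
      = ∑ j ∈ Finset.range (k-1), A j * yN k U V A j / U j
        + A (k-1) * yN k U V A (k-1) / U (k-1) := by
    have := Finset.sum_range_succ (fun j => A j * yN k U V A j / U j) (k-1)
    rw [hk1] at this
    rw [this]
  rw [h3, h4]
  have hL : A (k-1) * yN k U V A (k-1) / U (k-1) = A (k-1)^2 / (U (k-1) * V (k-1)) := by
    rw [yN, if_neg (by omega)]
    field_simp
  have hS : ∑ j ∈ Finset.range (k-1), A j * yN k U V A j / U j
      - ∑ j ∈ Finset.range (k-1), A (j+1) * yN k U V A j / U (j+1)
      = ∑ j ∈ Finset.range (k-1),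
        (U (j+1) * A j - U j * A (j+1))^2 /
          (U j * U (j+1) * (U (j+1) * V j - U j * V (j+1))) := by
    rw [← Finset.sum_sub_distrib]
    refine Finset.sum_congr rfl fun j hj => ?_
    have hjk : j + 1 < k := by have := Finset.mem_range.mp hj; omega
    rw [yN, if_pos hjk]
    have h5 := hU j (by omega)
    have h6 := hU (j+1) hjk
    have h7 := hd j hjk
    field_simp
  linarith [hS, hL]

noncomputable def extT (n k : ℕ) (t : Fin k → Fin n) (f : Fin n → ℝ) : ℕ → ℝ :=
  fun m => if h : m < k then f (t ⟨m, h⟩) else 1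

lemma extT_coe (n k : ℕ) (t : Fin k → Fin n) (f : Fin n → ℝ) (i : Fin k) :
    extT n k t f (i : ℕ) = f (t i) := by
  simp [extT, i.isLt]

theorem stmt_14 (n : ℕ) (hn : 1 ≤ n) (u v : Fin n → ℝ) (hA : Assumption1 n u v)
    (a c : Fin n → ℝ)
    (S : Finset (Fin n)) (k : ℕ) (hk : 0 < k) (t : Fin k → Fin n)
    (hmono : StrictMono t) (hrange : S = Finset.image t Finset.univ) :
    -(1 / 4) * (a ⬝ᵥ (hatInv n (facQ n u v) S *ᵥ a)) + ∑ i ∈ S, c i =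
      ∑ ℓ : Fin k,
        if h : (ℓ : ℕ) + 1 < k then arcMid n u v a c (t ℓ) (t ⟨(ℓ : ℕ) + 1, h⟩)
        else arcEnd n u v a c (t ℓ) := by
  subst hrange
  set S : Finset (Fin n) := Finset.image t Finset.univ with hS
  set Q : Matrix (Fin n) (Fin n) ℝ := facQ n u v with hQdef
  have hinj : Function.Injective t := hmono.injective
  have hmem : ∀ i : Fin k, t i ∈ S := fun i =>
    Finset.mem_image_of_mem t (Finset.mem_univ i)
  have hbij : Function.Bijective (fun i : Fin k => (⟨t i, hmem i⟩ : {x : Fin n // x ∈ S})) := by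
    constructor
    · intro i j h
      exact hinj (congrArg Subtype.val h)
    · rintro ⟨x, hx⟩
      rw [hS, Finset.mem_image] at hx
      obtain ⟨i, -, hi⟩ := hx
      exact ⟨i, Subtype.ext hi⟩
  set e : Fin k ≃ {x : Fin n // x ∈ S} := Equiv.ofBijective _ hbij with he
  have he_app : ∀ i : Fin k, (e i : Fin n) = t i := fun i => rfl
  set Un : ℕ → ℝ := extT n k t u with hUn
  set Vn : ℕ → ℝ := extT n k t v with hVn
  set An : ℕ → ℝ := extT n k t a with hAn
  set Cn : ℕ → ℝ := extT n k t c with hCn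
  set M : Matrix (Fin k) (Fin k) ℝ := (subMat n Q S).submatrix e e with hMdef
  have hM : ∀ i j : Fin k, M i j = if (i:ℕ) ≤ (j:ℕ) then Un i * Vn j else Un j * Vn i := by
    intro i j
    have h1 : M i j = Q (t i) (t j) := rfl
    rw [h1, hQdef]
    show (if t i ≤ t j then u (t i) * v (t j) else u (t j) * v (t i)) = _
    rw [hUn, hVn, extT_coe, extT_coe, extT_coe, extT_coe]
    by_cases h : (i:ℕ) ≤ (j:ℕ)
    · rw [if_pos h, if_pos (hmono.le_iff_le.mpr h)]
    · rw [if_neg h, if_neg (fun hc => h (hmono.le_iff_le.mp hc))]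
  have hUV : ∀ i, i < k → 0 < Un i * Vn i := by
    intro i hi
    rw [hUn, hVn]
    simp only [extT, dif_pos hi]
    exact hA.1 _
  have hD : ∀ i, i + 1 < k → 0 < Un i * Vn (i+1) * (Un (i+1) * Vn i - Un i * Vn (i+1)) := by
    intro i hi
    have hi' : i < k := by omega
    rw [hUn, hVn]
    simp only [extT, dif_pos hi, dif_pos hi']
    exact hA.2 _ _ (hmono (Fin.mk_lt_mk.mpr (by omega)))
  -- quadratic form reduction
  have hMinv : ∀ i j : Fin k, M⁻¹ i j = (subMat n Q S)⁻¹ (e i) (e j) := by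
    intro i j
    rw [hMdef, Matrix.inv_submatrix_equiv]
    rfl
  have hQF : a ⬝ᵥ (hatInv n Q S *ᵥ a) =
      (fun i : Fin k => An i) ⬝ᵥ (M⁻¹ *ᵥ fun i : Fin k => An i) := by
    show ∑ p : Fin n, a p * ∑ q : Fin n, hatInv n Q S p q * a q
      = ∑ i : Fin k, An i * ∑ j : Fin k, M⁻¹ i j * An j
    have hzero : ∀ p : Fin n, p ∉ S → a p * ∑ q : Fin n, hatInv n Q S p q * a q = 0 := by
      intro p hp
      simp [hatInv, hp]
    have hzero2 : ∀ p : Fin n, ∀ q : Fin n, q ∉ S → hatInv n Q S p q * a q = 0 := by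
      intro p q hq
      simp [hatInv, hq]
    rw [← Finset.sum_subset (Finset.subset_univ S) (fun x _ hx => hzero x hx)]
    have hinner : ∀ p : Fin n, ∑ q : Fin n, hatInv n Q S p q * a q
        = ∑ q ∈ S, hatInv n Q S p q * a q :=
      fun p => (Finset.sum_subset (Finset.subset_univ S) (fun x _ hx => hzero2 p x hx)).symm
    calc ∑ p ∈ S, a p * ∑ q : Fin n, hatInv n Q S p q * a q
        = ∑ p ∈ S, a p * ∑ q ∈ S, hatInv n Q S p q * a q := by
          exact Finset.sum_congr rfl fun p _ => by rw [hinner]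
      _ = ∑ i : Fin k, a (t i) * ∑ q ∈ S, hatInv n Q S (t i) q * a q := by
          rw [hS, Finset.sum_image (fun x _ y _ h => hinj h)]
      _ = ∑ i : Fin k, An i * ∑ j : Fin k, M⁻¹ i j * An j := by
          refine Finset.sum_congr rfl fun i _ => ?_
          rw [hAn, extT_coe]
          congr 1
          rw [hS, Finset.sum_image (fun x _ y _ h => hinj h)]
          refine Finset.sum_congr rfl fun j _ => ?_
          rw [extT_coe n k t a j, hMinv i j]
          congr 2
          rw [hatInv, Matrix.of_apply, dif_pos (hmem i), dif_pos (hmem j)]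
          rfl
  rw [hQF, coreN k hk Un Vn hUV hD M hM An]
  -- sum of c over S
  have hCsum : ∑ i ∈ S, c i = ∑ j ∈ Finset.range k, Cn j := by
    rw [hS, Finset.sum_image (fun x _ y _ h => hinj h),
      ← Fin.sum_univ_eq_sum_range (fun j => Cn j) k]
    exact Finset.sum_congr rfl fun i _ => by rw [hCn, extT_coe]
  rw [hCsum]
  -- right-hand side
  have hne : ∀ j, j < k → Un j ≠ 0 ∧ Vn j ≠ 0 := fun j hj =>
    ⟨left_ne_zero_of_mul (ne_of_gt (hUV j hj)), right_ne_zero_of_mul (ne_of_gt (hUV j hj))⟩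
  have hdne : ∀ j, j + 1 < k → Un (j+1) * Vn j - Un j * Vn (j+1) ≠ 0 := fun j hj =>
    right_ne_zero_of_mul (ne_of_gt (hD j hj))
  have hRHS : (∑ ℓ : Fin k,
        if h : (ℓ : ℕ) + 1 < k then arcMid n u v a c (t ℓ) (t ⟨(ℓ : ℕ) + 1, h⟩)
        else arcEnd n u v a c (t ℓ))
      = ∑ j ∈ Finset.range k,
          (if j + 1 < k then
            Cn j - (Un (j+1) * An j - Un j * An (j+1))^2 /
              (Un j * Un (j+1) * (Un (j+1) * Vn j - Un j * Vn (j+1))) / 4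
          else Cn j - An j ^ 2 / (Un j * Vn j) / 4) := by
    rw [← Fin.sum_univ_eq_sum_range (fun j =>
          (if j + 1 < k then
            Cn j - (Un (j+1) * An j - Un j * An (j+1))^2 /
              (Un j * Un (j+1) * (Un (j+1) * Vn j - Un j * Vn (j+1))) / 4
          else Cn j - An j ^ 2 / (Un j * Vn j) / 4)) k]
    refine Finset.sum_congr rfl fun ℓ _ => ?_
    by_cases h : (ℓ : ℕ) + 1 < k
    · rw [dif_pos h, if_pos h, arcMid]
      have hu1 : Un (↑ℓ + 1) = u (t ⟨↑ℓ + 1, h⟩) := by rw [hUn]; simp [extT, h]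
      have hv1 : Vn (↑ℓ + 1) = v (t ⟨↑ℓ + 1, h⟩) := by rw [hVn]; simp [extT, h]
      have ha1 : An (↑ℓ + 1) = a (t ⟨↑ℓ + 1, h⟩) := by rw [hAn]; simp [extT, h]
      rw [hCn, hUn, hVn, hAn, extT_coe, extT_coe, extT_coe, extT_coe] at *
      rw [hu1, hv1, ha1]
      have hun : u (t ℓ) ≠ 0 := left_ne_zero_of_mul (ne_of_gt (hA.1 (t ℓ)))
      have hun2 : u (t ⟨↑ℓ + 1, h⟩) ≠ 0 :=
        left_ne_zero_of_mul (ne_of_gt (hA.1 (t ⟨↑ℓ + 1, h⟩)))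
      have hdd : u (t ⟨↑ℓ + 1, h⟩) * v (t ℓ) - u (t ℓ) * v (t ⟨↑ℓ + 1, h⟩) ≠ 0 :=
        right_ne_zero_of_mul (ne_of_gt (hA.2 (t ℓ) (t ⟨↑ℓ + 1, h⟩)
          (hmono (show ℓ < ⟨↑ℓ + 1, h⟩ by rw [Fin.lt_def]; exact Nat.lt_succ_self _))))
      field_simp
    · rw [dif_neg h, if_neg h, arcEnd, hCn, hUn, hVn, hAn, extT_coe, extT_coe, extT_coe,
        extT_coe]
      ring
  rw [hRHS]
  -- final assembly
  have hk1 : k - 1 + 1 = k := Nat.succ_pred_eq_of_pos hk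
  have e1 := Finset.sum_range_succ Cn (k-1)
  rw [hk1] at e1
  have e2 := Finset.sum_range_succ (fun j =>
          (if j + 1 < k then
            Cn j - (Un (j+1) * An j - Un j * An (j+1))^2 /
              (Un j * Un (j+1) * (Un (j+1) * Vn j - Un j * Vn (j+1))) / 4
          else Cn j - An j ^ 2 / (Un j * Vn j) / 4)) (k-1)
  rw [hk1] at e2
  rw [e1, e2, if_neg (lt_irrefl k)]
  have e4 : ∑ j ∈ Finset.range (k-1), (if j + 1 < k then
            Cn j - (Un (j+1) * An j - Un j * An (j+1))^2 /
              (Un j * Un (j+1) * (Un (j+1) * Vn j - Un j * Vn (j+1))) / 4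
          else Cn j - An j ^ 2 / (Un j * Vn j) / 4)
      = ∑ j ∈ Finset.range (k-1), (Cn j - (Un (j+1) * An j - Un j * An (j+1))^2 /
              (Un j * Un (j+1) * (Un (j+1) * Vn j - Un j * Vn (j+1))) / 4) := by
    refine Finset.sum_congr rfl fun j hj => ?_
    rw [if_pos (by have := Finset.mem_range.mp hj; omega)]
  rw [e4, Finset.sum_sub_distrib]
  rw [show (∑ j ∈ Finset.range (k-1), (Un (j+1) * An j - Un j * An (j+1))^2 /
              (Un j * Un (j+1) * (Un (j+1) * Vn j - Un j * Vn (j+1))) / 4)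
      = (∑ j ∈ Finset.range (k-1), (Un (j+1) * An j - Un j * An (j+1))^2 /
              (Un j * Un (j+1) * (Un (j+1) * Vn j - Un j * Vn (j+1)))) / 4 from
    (Finset.sum_div _ _ _).symm]
  ring
end

section
/- Let n ≥ 1, let α_1, …, α_n ∈ ℝ be nonzero, and let p_2, …, p_{n+1} > 0. Define Q ∈ ℝ^{n×n} by Q_{ij} = Q_{ji} = Σ_{τ=j+1}^{n+1} p_τ · (Π_{t=1}^{τ−i−1} α_{τ−t}) · (Π_{t=1}^{τ−j−1} α_{τ−t}) for 1 ≤ i ≤ j ≤ n (empty products equal 1). Define u_i = Π_{t=1}^{n−i} α_{n+1−t} and v_i = (Σ_{τ=i+1}^{n+1} p_τ (Π_{t=1}^{τ−i−1} α_{τ−t})²) / u_i for 1 ≤ i ≤ n. Then: (a) Q_{ij} = u_i v_j for all 1 ≤ i ≤ j ≤ n, so Q is the factorizable matrix Q(u,v); (b) u_i v_i > 0 for all i ∈ {1,…,n}; and (c) u_i v_j (u_j v_i − u_i v_j) > 0 for all 1 ≤ i < j ≤ n. Consequently Q satisfies Assumption 1 and is positive definite. -/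
open Matrix BigOperators

/-- `Π_{t=1}^{m} α_{τ−t}` (empty product equals 1). -/
noncomputable def prodA (α : ℕ → ℝ) (τ m : ℕ) : ℝ :=
  ∏ t ∈ Finset.Icc 1 m, α (τ - t)

/-- `Q_{ij} = Σ_{τ=j+1}^{n+1} p_τ (Π_{t=1}^{τ−i−1} α_{τ−t}) (Π_{t=1}^{τ−j−1} α_{τ−t})`
(1-based indices `i ≤ j`). -/
noncomputable def Qent (n : ℕ) (α p : ℕ → ℝ) (i j : ℕ) : ℝ :=
  ∑ τ ∈ Finset.Icc (j + 1) (n + 1), p τ * prodA α τ (τ - i - 1) * prodA α τ (τ - j - 1)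

/-- `u_i = Π_{t=1}^{n−i} α_{n+1−t}` (1-based index `i`). -/
noncomputable def uSeq (n : ℕ) (α : ℕ → ℝ) (i : ℕ) : ℝ :=
  prodA α (n + 1) (n - i)

/-- `v_i = (Σ_{τ=i+1}^{n+1} p_τ (Π_{t=1}^{τ−i−1} α_{τ−t})²) / u_i` (1-based index `i`). -/
noncomputable def vSeq (n : ℕ) (α p : ℕ → ℝ) (i : ℕ) : ℝ :=
  (∑ τ ∈ Finset.Icc (i + 1) (n + 1), p τ * prodA α τ (τ - i - 1) ^ 2) / uSeq n α i

/-- The symmetric matrix with entries `Q_{ij}` (translated to 0-based `Fin n` indices). -/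
noncomputable def QfromDyn (n : ℕ) (α p : ℕ → ℝ) : Matrix (Fin n) (Fin n) ℝ :=
  Matrix.of fun i j =>
    if i ≤ j then Qent n α p ((i : ℕ) + 1) ((j : ℕ) + 1)
    else Qent n α p ((j : ℕ) + 1) ((i : ℕ) + 1)

namespace StmtAux

/-- `g α i τ = ∏_{s=i+1}^{τ-1} α s`. -/
noncomputable def g (α : ℕ → ℝ) (i τ : ℕ) : ℝ := ∏ s ∈ Finset.Ioc i (τ - 1), α s

lemma prodA_eq_g (α : ℕ → ℝ) {τ i : ℕ} (h : i + 1 ≤ τ) :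
    prodA α τ (τ - i - 1) = g α i τ := by
  unfold prodA g
  refine Finset.prod_nbij' (fun t => τ - t) (fun s => τ - s) ?_ ?_ ?_ ?_ ?_
  · intro a ha; simp only [Finset.mem_Icc] at ha; simp only [Finset.mem_Ioc]; omega
  · intro a ha; simp only [Finset.mem_Ioc] at ha; simp only [Finset.mem_Icc]; omega
  · intro a ha; simp only [Finset.mem_Icc] at ha; show τ - (τ - a) = a; omega
  · intro a ha; simp only [Finset.mem_Ioc] at ha; show τ - (τ - a) = a; omega
  · intro a _; rfl

lemma g_split (α : ℕ → ℝ) {i j τ : ℕ} (hij : i ≤ j) (hjτ : j ≤ τ - 1) :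
    g α i τ = (∏ s ∈ Finset.Ioc i j, α s) * g α j τ := by
  unfold g; rw [Finset.prod_Ioc_consecutive _ hij hjτ]

/-- `S i = Σ_{τ=i+1}^{n+1} p_τ (g α i τ)²`. -/
noncomputable def S (n : ℕ) (α p : ℕ → ℝ) (i : ℕ) : ℝ :=
  ∑ τ ∈ Finset.Icc (i + 1) (n + 1), p τ * g α i τ ^ 2

end StmtAux

theorem stmt_18 (n : ℕ) (hn : 1 ≤ n) (α p : ℕ → ℝ)
    (hα : ∀ i : ℕ, 1 ≤ i → i ≤ n → α i ≠ 0)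
    (hp : ∀ τ : ℕ, 2 ≤ τ → τ ≤ n + 1 → 0 < p τ) :
    (∀ i j : Fin n, i ≤ j →
        Qent n α p ((i : ℕ) + 1) ((j : ℕ) + 1) =
          uSeq n α ((i : ℕ) + 1) * vSeq n α p ((j : ℕ) + 1)) ∧
    QfromDyn n α p =
      facQ n (fun i => uSeq n α ((i : ℕ) + 1)) (fun i => vSeq n α p ((i : ℕ) + 1)) ∧
    (∀ i : Fin n, 0 < uSeq n α ((i : ℕ) + 1) * vSeq n α p ((i : ℕ) + 1)) ∧
    (∀ i j : Fin n, i < j →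
        0 < uSeq n α ((i : ℕ) + 1) * vSeq n α p ((j : ℕ) + 1) *
          (uSeq n α ((j : ℕ) + 1) * vSeq n α p ((i : ℕ) + 1) -
            uSeq n α ((i : ℕ) + 1) * vSeq n α p ((j : ℕ) + 1))) ∧
    Assumption1 n (fun i => uSeq n α ((i : ℕ) + 1)) (fun i => vSeq n α p ((i : ℕ) + 1)) ∧
    (QfromDyn n α p).PosDef := by
  classical
  have hg_ne : ∀ i τ : ℕ, τ ≤ n + 1 → StmtAux.g α i τ ≠ 0 := by
    intro i τ h
    refine Finset.prod_ne_zero_iff.mpr fun s hs => ?_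
    rw [Finset.mem_Ioc] at hs
    exact hα s (by omega) (by omega)
  have hu_eq : ∀ i : ℕ, i ≤ n → uSeq n α i = StmtAux.g α i (n + 1) := by
    intro i h
    unfold uSeq
    have h2 : n - i = n + 1 - i - 1 := by omega
    rw [h2, StmtAux.prodA_eq_g α (by omega)]
  have hv_eq : ∀ i : ℕ, vSeq n α p i = StmtAux.S n α p i / uSeq n α i := by
    intro i
    unfold vSeq StmtAux.S
    congr 1
    refine Finset.sum_congr rfl fun τ hτ => ?_
    rw [Finset.mem_Icc] at hτ
    rw [StmtAux.prodA_eq_g α (by omega)]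
  have hS_pos : ∀ i : ℕ, 1 ≤ i → i ≤ n → 0 < StmtAux.S n α p i := by
    intro i h1 h2
    refine Finset.sum_pos (fun τ hτ => ?_) (Finset.nonempty_Icc.mpr (by omega))
    rw [Finset.mem_Icc] at hτ
    exact mul_pos (hp τ (by omega) (by omega))
      (pow_two_pos_of_ne_zero (hg_ne i τ (by omega)))
  have hQent : ∀ i j : ℕ, 1 ≤ i → i ≤ j → j ≤ n →
      Qent n α p i j = (∏ s ∈ Finset.Ioc i j, α s) * StmtAux.S n α p j := by
    intro i j h1 hij hjn
    unfold Qent StmtAux.S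
    rw [Finset.mul_sum]
    refine Finset.sum_congr rfl fun τ hτ => ?_
    rw [Finset.mem_Icc] at hτ
    rw [StmtAux.prodA_eq_g α (show i + 1 ≤ τ by omega),
      StmtAux.prodA_eq_g α (show j + 1 ≤ τ by omega),
      StmtAux.g_split α hij (show j ≤ τ - 1 by omega)]
    ring
  have huv : ∀ i j : ℕ, 1 ≤ i → i ≤ j → j ≤ n →
      uSeq n α i * vSeq n α p j = (∏ s ∈ Finset.Ioc i j, α s) * StmtAux.S n α p j := by
    intro i j h1 hij hjn
    have h0 : StmtAux.g α j (n + 1) ≠ 0 := hg_ne j (n + 1) le_rfl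
    rw [hv_eq j, hu_eq i (le_trans hij hjn), hu_eq j hjn,
      StmtAux.g_split α hij (show j ≤ n + 1 - 1 by omega)]
    field_simp
  have partA : ∀ i j : Fin n, i ≤ j →
      Qent n α p ((i : ℕ) + 1) ((j : ℕ) + 1) =
        uSeq n α ((i : ℕ) + 1) * vSeq n α p ((j : ℕ) + 1) := by
    intro i j hij
    have hij' : (i : ℕ) ≤ (j : ℕ) := hij
    have hjn := j.isLt
    rw [hQent ((i : ℕ) + 1) ((j : ℕ) + 1) (by omega) (by omega) (by omega),
      huv ((i : ℕ) + 1) ((j : ℕ) + 1) (by omega) (by omega) (by omega)]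
  have partB : ∀ i : Fin n,
      0 < uSeq n α ((i : ℕ) + 1) * vSeq n α p ((i : ℕ) + 1) := by
    intro i
    have hin := i.isLt
    have hu0 : uSeq n α ((i : ℕ) + 1) ≠ 0 := by
      rw [hu_eq _ (by omega)]; exact hg_ne _ _ le_rfl
    rw [hv_eq, mul_comm, div_mul_cancel₀ _ hu0]
    exact hS_pos _ (by omega) (by omega)
  have partC : ∀ i j : Fin n, i < j →
      0 < uSeq n α ((i : ℕ) + 1) * vSeq n α p ((j : ℕ) + 1) *
        (uSeq n α ((j : ℕ) + 1) * vSeq n α p ((i : ℕ) + 1) -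
          uSeq n α ((i : ℕ) + 1) * vSeq n α p ((j : ℕ) + 1)) := by
    intro i j hij
    have hij' : (i : ℕ) < (j : ℕ) := hij
    have hjn := j.isLt
    set i' : ℕ := (i : ℕ) + 1 with hi'
    set j' : ℕ := (j : ℕ) + 1 with hj'
    set C : ℝ := ∏ s ∈ Finset.Ioc i' j', α s with hC
    have hC0 : C ≠ 0 := by
      refine Finset.prod_ne_zero_iff.mpr fun s hs => ?_
      rw [Finset.mem_Ioc] at hs
      exact hα s (by omega) (by omega)
    have hum : uSeq n α i' * vSeq n α p j' = C * StmtAux.S n α p j' :=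
      huv i' j' (by omega) (by omega) (by omega)
    have hgj0 : StmtAux.g α j' (n + 1) ≠ 0 := hg_ne _ _ le_rfl
    have hvj : uSeq n α j' * vSeq n α p i' = StmtAux.S n α p i' / C := by
      rw [hv_eq i', hu_eq i' (by omega), hu_eq j' (by omega),
        StmtAux.g_split α (show i' ≤ j' by omega) (show j' ≤ n + 1 - 1 by omega)]
      rw [← hC]
      field_simp
    set T : ℝ := ∑ τ ∈ Finset.Ioc i' j', p τ * StmtAux.g α i' τ ^ 2 with hT
    have hkey : StmtAux.S n α p i' = T + C ^ 2 * StmtAux.S n α p j' := by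
      unfold StmtAux.S
      rw [Finset.Icc_add_one_left_eq_Ioc, Finset.Icc_add_one_left_eq_Ioc,
        ← Finset.sum_Ioc_consecutive _ (show i' ≤ j' by omega) (show j' ≤ n + 1 by omega)]
      congr 1
      rw [Finset.mul_sum]
      refine Finset.sum_congr rfl fun τ hτ => ?_
      rw [Finset.mem_Ioc] at hτ
      rw [StmtAux.g_split α (show i' ≤ j' by omega) (show j' ≤ τ - 1 by omega)]
      ring
    have hT_pos : 0 < T := by
      refine Finset.sum_pos (fun τ hτ => ?_) (Finset.nonempty_Ioc.mpr (by omega))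
      rw [Finset.mem_Ioc] at hτ
      exact mul_pos (hp τ (by omega) (by omega))
        (pow_two_pos_of_ne_zero (hg_ne i' τ (by omega)))
    have hSj : 0 < StmtAux.S n α p j' := hS_pos j' (by omega) (by omega)
    rw [hum, hvj]
    have heq : C * StmtAux.S n α p j' *
        (StmtAux.S n α p i' / C - C * StmtAux.S n α p j') =
        StmtAux.S n α p j' * (StmtAux.S n α p i' - C ^ 2 * StmtAux.S n α p j') := by
      field_simp
    rw [heq, hkey]
    have : T + C ^ 2 * StmtAux.S n α p j' - C ^ 2 * StmtAux.S n α p j' = T := by ring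
    rw [this]
    exact mul_pos hSj hT_pos
  -- the Cholesky-type factor
  set B : Matrix (Fin n) (Fin n) ℝ := Matrix.of fun k i =>
    if (i : ℕ) ≤ (k : ℕ) then
      Real.sqrt (p ((k : ℕ) + 2)) * StmtAux.g α ((i : ℕ) + 1) ((k : ℕ) + 2)
    else 0 with hB
  have hBtB : ∀ i j : Fin n, (i : ℕ) ≤ (j : ℕ) →
      ∑ k : Fin n, B k i * B k j = Qent n α p ((i : ℕ) + 1) ((j : ℕ) + 1) := by
    intro i j hij
    have hR : Qent n α p ((i : ℕ) + 1) ((j : ℕ) + 1) =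
        ∑ k ∈ Finset.Ico (j : ℕ) n,
          p (k + 2) * StmtAux.g α ((i : ℕ) + 1) (k + 2) *
            StmtAux.g α ((j : ℕ) + 1) (k + 2) := by
      unfold Qent
      have h1 : Finset.Icc ((j : ℕ) + 1 + 1) (n + 1) =
          (Finset.Ico (j : ℕ) n).map (addRightEmbedding 2) := by
        rw [Finset.map_add_right_Ico]
        ext τ
        simp only [Finset.mem_Icc, Finset.mem_Ico]
        omega
      rw [h1, Finset.sum_map]
      refine Finset.sum_congr rfl fun k hk => ?_
      rw [Finset.mem_Ico] at hk
      simp only [addRightEmbedding_apply]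
      rw [StmtAux.prodA_eq_g α (by omega), StmtAux.prodA_eq_g α (by omega)]
    have hL : ∀ k : Fin n, B k i * B k j =
        if (j : ℕ) ≤ (k : ℕ) then
          p ((k : ℕ) + 2) * StmtAux.g α ((i : ℕ) + 1) ((k : ℕ) + 2) *
            StmtAux.g α ((j : ℕ) + 1) ((k : ℕ) + 2)
        else 0 := by
      intro k
      have hk := k.isLt
      simp only [hB, Matrix.of_apply]
      by_cases h : (j : ℕ) ≤ (k : ℕ)
      · rw [if_pos h, if_pos (le_trans hij h), if_pos h]
        have hp0 : 0 ≤ p ((k : ℕ) + 2) := (hp _ (by omega) (by omega)).le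
        rw [show Real.sqrt (p ((k : ℕ) + 2)) * StmtAux.g α ((i : ℕ) + 1) ((k : ℕ) + 2) *
            (Real.sqrt (p ((k : ℕ) + 2)) * StmtAux.g α ((j : ℕ) + 1) ((k : ℕ) + 2)) =
            Real.sqrt (p ((k : ℕ) + 2)) * Real.sqrt (p ((k : ℕ) + 2)) *
              (StmtAux.g α ((i : ℕ) + 1) ((k : ℕ) + 2) *
                StmtAux.g α ((j : ℕ) + 1) ((k : ℕ) + 2)) from by ring,
          Real.mul_self_sqrt hp0]
        ring
      · rw [if_neg h, mul_zero, if_neg h]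
    calc ∑ k : Fin n, B k i * B k j
        = ∑ k : Fin n, (if (j : ℕ) ≤ (k : ℕ) then
            p ((k : ℕ) + 2) * StmtAux.g α ((i : ℕ) + 1) ((k : ℕ) + 2) *
              StmtAux.g α ((j : ℕ) + 1) ((k : ℕ) + 2) else 0) :=
          Finset.sum_congr rfl fun k _ => hL k
      _ = ∑ k ∈ Finset.range n, (if (j : ℕ) ≤ k then
            p (k + 2) * StmtAux.g α ((i : ℕ) + 1) (k + 2) *
              StmtAux.g α ((j : ℕ) + 1) (k + 2) else 0) :=
          Fin.sum_univ_eq_sum_range (fun k => if (j : ℕ) ≤ k then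
            p (k + 2) * StmtAux.g α ((i : ℕ) + 1) (k + 2) *
              StmtAux.g α ((j : ℕ) + 1) (k + 2) else 0) n
      _ = ∑ k ∈ Finset.filter (fun k => (j : ℕ) ≤ k) (Finset.range n),
            p (k + 2) * StmtAux.g α ((i : ℕ) + 1) (k + 2) *
              StmtAux.g α ((j : ℕ) + 1) (k + 2) := (Finset.sum_filter _ _).symm
      _ = ∑ k ∈ Finset.Ico (j : ℕ) n,
            p (k + 2) * StmtAux.g α ((i : ℕ) + 1) (k + 2) *
              StmtAux.g α ((j : ℕ) + 1) (k + 2) := by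
          congr 1
          ext k
          simp only [Finset.mem_filter, Finset.mem_range, Finset.mem_Ico]
          omega
      _ = Qent n α p ((i : ℕ) + 1) ((j : ℕ) + 1) := hR.symm
  have hQB : QfromDyn n α p = Bᵀ * B := by
    ext i j
    rw [Matrix.mul_apply]
    simp only [Matrix.transpose_apply]
    unfold QfromDyn
    simp only [Matrix.of_apply]
    split_ifs with h
    · exact (hBtB i j h).symm
    · have h2 : (j : ℕ) ≤ (i : ℕ) := le_of_not_ge h
      rw [← hBtB j i h2]
      exact Finset.sum_congr rfl fun k _ => mul_comm _ _
  have hdet : B.det ≠ 0 := by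
    have htri : B.BlockTriangular OrderDual.toDual := by
      intro a b hab
      simp only [OrderDual.toDual_lt_toDual] at hab
      have hab' : (a : ℕ) < (b : ℕ) := hab
      simp only [hB, Matrix.of_apply]
      rw [if_neg (by omega)]
    rw [Matrix.det_of_lowerTriangular B htri]
    refine Finset.prod_ne_zero_iff.mpr fun k _ => ?_
    have hk := k.isLt
    simp only [hB, Matrix.of_apply, if_pos (le_refl ((k : ℕ)))]
    have hg1 : StmtAux.g α ((k : ℕ) + 1) ((k : ℕ) + 2) = 1 := by
      unfold StmtAux.g
      rw [show (k : ℕ) + 2 - 1 = (k : ℕ) + 1 from rfl, Finset.Ioc_self, Finset.prod_empty]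
    rw [hg1, mul_one]
    exact Real.sqrt_ne_zero'.mpr (hp _ (by omega) (by omega))
  have hinj : Function.Injective B.mulVec :=
    Matrix.mulVec_injective_iff_isUnit.mpr
      ((Matrix.isUnit_iff_isUnit_det B).mpr (isUnit_iff_ne_zero.mpr hdet))
  have hsym : ∀ a b : Fin n, QfromDyn n α p a b = QfromDyn n α p b a := by
    intro a b
    unfold QfromDyn
    simp only [Matrix.of_apply]
    rcases lt_trichotomy a b with h | h | h
    · rw [if_pos h.le, if_neg (not_le.mpr h)]
    · subst h; simp
    · rw [if_neg (not_le.mpr h), if_pos h.le]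
  have hposdef : (QfromDyn n α p).PosDef := by
    refine Matrix.posDef_iff_dotProduct_mulVec.mpr ⟨?_, ?_⟩
    · exact Matrix.ext fun a b => by
        rw [Matrix.conjTranspose_apply, star_trivial]; exact hsym b a
    · intro x hx
      have hy : B *ᵥ x ≠ 0 := fun h0 => hx (hinj (by rw [h0, Matrix.mulVec_zero]))
      have hdp : star x ⬝ᵥ (QfromDyn n α p *ᵥ x) = (B *ᵥ x) ⬝ᵥ (B *ᵥ x) := by
        rw [hQB, show star x = x from funext fun _ => star_trivial _,
          ← Matrix.mulVec_mulVec, Matrix.dotProduct_mulVec, Matrix.vecMul_transpose]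
      rw [hdp]
      obtain ⟨a, ha⟩ := Function.ne_iff.mp hy
      simp only [dotProduct]
      exact Finset.sum_pos' (fun b _ => mul_self_nonneg _)
        ⟨a, Finset.mem_univ a, mul_self_pos.mpr ha⟩
  refine ⟨partA, ?_, partB, partC, ⟨fun i => by simpa using partB i,
    fun i j hij => by simpa using partC i j hij⟩, hposdef⟩
  ext i j
  unfold QfromDyn facQ
  simp only [Matrix.of_apply]
  split_ifs with h
  · exact partA i j h
  · exact partA j i (le_of_not_ge h)
end
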